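/- arXiv:2008.07036 — 2 statements merged into one kernel-verified Lean document; each statement's English description precedes it below -/
import Mathlib

section
/- Let 0 < η < 1/e. There exists a constant C > 0 such that for every real z with z ≠ 0, the series ∑_{k=1}^∞ sin²(k z) / k³ converges and ∑_{k=1}^∞ sin²(k z) / k³ ≤ C·z²·κ̃₂(|z|). -/
open Real

/-- `κ̃₂(x) = log(1/x)` for `0 < x ≤ η`, and for `x > η`,
`κ̃₂(x) = (((log(1/η))^{1/2} − (1/2)(log(1/η))^{−1/2})·x + (1/2)(log(1/η))^{−1/2}·η)² / x²`. -/
noncomputable def kappa2 (η x : ℝ) : ℝ :=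
  if x ≤ η then Real.log (1 / x)
  else ((Real.sqrt (Real.log (1 / η)) - (1 / 2) * (Real.sqrt (Real.log (1 / η)))⁻¹) * x
        + (1 / 2) * (Real.sqrt (Real.log (1 / η)))⁻¹ * η) ^ 2 / x ^ 2

private lemma summable_cube : Summable (fun k : ℕ => 1 / ((k : ℝ) + 1) ^ 3) := by
  have h : Summable (fun n : ℕ => 1 / (n : ℝ) ^ 3) :=
    Real.summable_one_div_nat_pow.2 (by norm_num)
  have h2 := (summable_nat_add_iff 1).2 h
  refine h2.congr fun n => by push_cast; ring

private noncomputable def G (m : ℕ) : ℝ := 1 / (2 * (m : ℝ) * ((m : ℝ) + 1))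

private lemma step_bound (m : ℕ) (hm : 1 ≤ m) :
    1 / ((m : ℝ) + 1) ^ 3 ≤ G m - G (m + 1) := by
  have hx : (1 : ℝ) ≤ (m : ℝ) := by exact_mod_cast hm
  set x := (m : ℝ) with hxdef
  have hx0 : 0 < x := by linarith
  have key : G m - G (m + 1) = 1 / (x * (x + 1) * (x + 2)) := by
    simp only [G]
    push_cast
    rw [div_sub_div _ _ (by positivity) (by positivity)]
    rw [div_eq_div_iff (by positivity) (by positivity)]
    ring
  rw [key]
  apply one_div_le_one_div_of_le (by positivity)
  nlinarith

private lemma tail_bound (N : ℕ) (hN : 1 ≤ N) :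
    (∑' k : ℕ, 1 / (((k + N : ℕ) : ℝ) + 1) ^ 3) ≤ G N := by
  apply Real.tsum_le_of_sum_range_le (fun n => by positivity)
  intro n
  calc ∑ k ∈ Finset.range n, 1 / (((k + N : ℕ) : ℝ) + 1) ^ 3
      ≤ ∑ k ∈ Finset.range n, (G (k + N) - G ((k + 1) + N)) := by
        apply Finset.sum_le_sum
        intro k _
        have h := step_bound (k + N) (hN.trans (Nat.le_add_left N k))
        simpa [Nat.add_assoc, Nat.add_comm, Nat.add_left_comm] using h
    _ = G (0 + N) - G (n + N) := Finset.sum_range_sub' (fun i => G (i + N)) n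
    _ ≤ G N := by
        have h1 : (0 : ℝ) ≤ G (n + N) := by unfold G; positivity
        simp only [Nat.zero_add]
        linarith

private lemma harmonic_sum (N : ℕ) :
    ∑ k ∈ Finset.range N, (1 : ℝ) / ((k : ℝ) + 1) ≤ 1 + Real.log N := by
  have h := harmonic_le_one_add_log N
  have he : ((harmonic N : ℚ) : ℝ) = ∑ k ∈ Finset.range N, (1 : ℝ) / ((k : ℝ) + 1) := by
    rw [harmonic]
    push_cast
    simp [one_div]
  linarith [he ▸ h]

set_option maxHeartbeats 1000000 in
/-- For `0 < η < 1/e` there is `C > 0` such that for every `z ≠ 0`, the series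
`∑_{k≥1} sin²(kz)/k³` converges and is bounded by `C·z²·κ̃₂(|z|)`. -/
theorem sum_sin_sq_div_cube_le (η : ℝ) (hη₀ : 0 < η) (hη₁ : η < 1 / Real.exp 1) :
    ∃ C : ℝ, 0 < C ∧ ∀ z : ℝ, z ≠ 0 →
      Summable (fun k : ℕ => Real.sin ((k + 1 : ℝ) * z) ^ 2 / ((k : ℝ) + 1) ^ 3) ∧
      (∑' k : ℕ, Real.sin ((k + 1 : ℝ) * z) ^ 2 / ((k : ℝ) + 1) ^ 3) ≤
        C * z ^ 2 * kappa2 η |z| := by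
  have hexp : (2 : ℝ) ≤ Real.exp 1 := by
    have := Real.add_one_le_exp 1
    linarith
  have hη1 : η < 1 := hη₁.trans (by
    rw [div_lt_one (Real.exp_pos 1)]
    linarith)
  have hL : 1 < Real.log (1 / η) := by
    rw [Real.lt_log_iff_exp_lt (by positivity)]
    rw [lt_div_iff₀ hη₀]
    calc Real.exp 1 * η < Real.exp 1 * (1 / Real.exp 1) := by
          apply mul_lt_mul_of_pos_left hη₁ (Real.exp_pos 1)
      _ = 1 := by field_simp
  refine ⟨3 + 8 / η ^ 2, by positivity, fun z hz => ?_⟩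
  set t := |z| with htdef
  have ht0 : 0 < t := abs_pos.2 hz
  have htz : t ^ 2 = z ^ 2 := sq_abs z
  -- summability
  have hsum : Summable (fun k : ℕ => Real.sin ((k + 1 : ℝ) * z) ^ 2 / ((k : ℝ) + 1) ^ 3) := by
    apply Summable.of_nonneg_of_le (fun k => by positivity) _ summable_cube
    intro k
    have h1 : Real.sin ((k + 1 : ℝ) * z) ^ 2 ≤ 1 := Real.sin_sq_le_one _
    gcongr
  refine ⟨hsum, ?_⟩
  have hterm1 : ∀ k : ℕ, Real.sin ((k + 1 : ℝ) * z) ^ 2 / ((k : ℝ) + 1) ^ 3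
      ≤ z ^ 2 / ((k : ℝ) + 1) := by
    intro k
    have h1 : Real.sin ((k + 1 : ℝ) * z) ^ 2 ≤ (((k : ℝ) + 1) * z) ^ 2 := Real.sin_sq_le_sq
    have hk : (0 : ℝ) < (k : ℝ) + 1 := by positivity
    calc Real.sin ((k + 1 : ℝ) * z) ^ 2 / ((k : ℝ) + 1) ^ 3
        ≤ (((k : ℝ) + 1) * z) ^ 2 / ((k : ℝ) + 1) ^ 3 := by gcongr
      _ = z ^ 2 / ((k : ℝ) + 1) := by field_simp
  by_cases hcase : t ≤ η
  · -- small |z|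
    set N := Nat.floor (1 / t) with hNdef
    have hN1 : 1 ≤ N := by
      apply Nat.le_floor
      rw [Nat.cast_one, le_div_iff₀ ht0]
      nlinarith
    have hN1R : (1 : ℝ) ≤ (N : ℝ) := by exact_mod_cast hN1
    have hNpos : (0 : ℝ) < (N : ℝ) := by linarith
    have hNle : (N : ℝ) ≤ 1 / t := Nat.floor_le (by positivity)
    have hNgt : 1 / t < (N : ℝ) + 1 := Nat.lt_floor_add_one _
    have hlog1 : 1 ≤ Real.log (1 / t) := by
      calc (1 : ℝ) ≤ Real.log (1 / η) := hL.le
        _ ≤ Real.log (1 / t) := by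
            apply Real.log_le_log (by positivity)
            exact one_div_le_one_div_of_le ht0 hcase
    have hhead : ∑ k ∈ Finset.range N, Real.sin ((k + 1 : ℝ) * z) ^ 2 / ((k : ℝ) + 1) ^ 3
        ≤ 2 * (z ^ 2 * Real.log (1 / t)) := by
      calc ∑ k ∈ Finset.range N, Real.sin ((k + 1 : ℝ) * z) ^ 2 / ((k : ℝ) + 1) ^ 3
          ≤ ∑ k ∈ Finset.range N, z ^ 2 / ((k : ℝ) + 1) :=
            Finset.sum_le_sum fun k _ => hterm1 k
        _ = z ^ 2 * ∑ k ∈ Finset.range N, 1 / ((k : ℝ) + 1) := by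
            rw [Finset.mul_sum]; exact Finset.sum_congr rfl fun k _ => by ring
        _ ≤ z ^ 2 * (1 + Real.log N) :=
            mul_le_mul_of_nonneg_left (harmonic_sum N) (by positivity)
        _ ≤ z ^ 2 * (Real.log (1 / t) + Real.log (1 / t)) := by
            apply mul_le_mul_of_nonneg_left _ (by positivity)
            have hlogN : Real.log N ≤ Real.log (1 / t) := Real.log_le_log hNpos hNle
            linarith
        _ = 2 * (z ^ 2 * Real.log (1 / t)) := by ring
    have htail : (∑' k : ℕ,
        Real.sin (((k + N : ℕ) + 1 : ℝ) * z) ^ 2 / (((k + N : ℕ) : ℝ) + 1) ^ 3)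
        ≤ z ^ 2 * Real.log (1 / t) := by
      have hsumtail : Summable (fun k : ℕ => 1 / (((k + N : ℕ) : ℝ) + 1) ^ 3) :=
        (summable_nat_add_iff (f := fun k : ℕ => 1 / ((k : ℝ) + 1) ^ 3) N).2 summable_cube
      have hGle : G N ≤ t ^ 2 := by
        have h2 : 1 < ((N : ℝ) + 1) * t := (div_lt_iff₀ ht0).1 hNgt
        have h4 : 0 ≤ t ^ 2 * (((N : ℝ) - 1) * ((N : ℝ) + 1)) :=
          mul_nonneg (sq_nonneg t) (mul_nonneg (by linarith) (by positivity))
        simp only [G]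
        rw [div_le_iff₀ (by positivity)]
        nlinarith [sq_nonneg (((N : ℝ) + 1) * t - 1)]
      calc (∑' k : ℕ,
          Real.sin (((k + N : ℕ) + 1 : ℝ) * z) ^ 2 / (((k + N : ℕ) : ℝ) + 1) ^ 3)
          ≤ ∑' k : ℕ, 1 / (((k + N : ℕ) : ℝ) + 1) ^ 3 := by
            have hb : ∀ k : ℕ, Real.sin (((k + N : ℕ) + 1 : ℝ) * z) ^ 2
                / (((k + N : ℕ) : ℝ) + 1) ^ 3 ≤ 1 / (((k + N : ℕ) : ℝ) + 1) ^ 3 := by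
              intro k
              have h1 : Real.sin (((k + N : ℕ) + 1 : ℝ) * z) ^ 2 ≤ 1 := Real.sin_sq_le_one _
              gcongr
            exact Summable.tsum_le_tsum hb ((summable_nat_add_iff (f := fun k : ℕ =>
              Real.sin ((k + 1 : ℝ) * z) ^ 2 / ((k : ℝ) + 1) ^ 3) N).2 hsum) hsumtail
        _ ≤ G N := tail_bound N hN1
        _ ≤ t ^ 2 := hGle
        _ ≤ z ^ 2 * Real.log (1 / t) := by rw [← htz]; nlinarith [sq_nonneg t]
    have hsplit := Summable.sum_add_tsum_nat_add N hsum
    have hκ : kappa2 η t = Real.log (1 / t) := by rw [kappa2, if_pos hcase]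
    rw [hκ, ← hsplit]
    have hpos : 0 ≤ 8 / η ^ 2 * (z ^ 2 * Real.log (1 / t)) :=
      mul_nonneg (by positivity) (mul_nonneg (sq_nonneg z) (by linarith))
    nlinarith [hhead, htail]
  · -- large |z|
    push_neg at hcase
    have hbound : (∑' k : ℕ, Real.sin ((k + 1 : ℝ) * z) ^ 2 / ((k : ℝ) + 1) ^ 3) ≤ 5 / 4 := by
      have h1 : (∑' k : ℕ, Real.sin ((k + 1 : ℝ) * z) ^ 2 / ((k : ℝ) + 1) ^ 3)
          ≤ ∑' k : ℕ, 1 / ((k : ℝ) + 1) ^ 3 := by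
        have hb : ∀ k : ℕ, Real.sin ((k + 1 : ℝ) * z) ^ 2 / ((k : ℝ) + 1) ^ 3
            ≤ 1 / ((k : ℝ) + 1) ^ 3 := by
          intro k
          have h1 : Real.sin ((k + 1 : ℝ) * z) ^ 2 ≤ 1 := Real.sin_sq_le_one _
          gcongr
        exact Summable.tsum_le_tsum hb hsum summable_cube
      have hsplit := Summable.sum_add_tsum_nat_add 1 summable_cube
      have htail1 := tail_bound 1 le_rfl
      have hG1 : G 1 = 1 / 4 := by norm_num [G]
      have hhead1 : ∑ k ∈ Finset.range 1, 1 / ((k : ℝ) + 1) ^ 3 = 1 := by norm_num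
      linarith [hsplit, htail1, h1, hG1, hhead1]
    have hs1 : 1 < Real.sqrt (Real.log (1 / η)) := by
      have := Real.sqrt_lt_sqrt (by norm_num) hL
      simpa using this
    have hsinv : (Real.sqrt (Real.log (1 / η)))⁻¹ < 1 := inv_lt_one_of_one_lt₀ hs1
    have hsinv0 : 0 < (Real.sqrt (Real.log (1 / η)))⁻¹ := by positivity
    have hκ : 1 / 4 ≤ kappa2 η t := by
      rw [kappa2, if_neg (not_le.2 hcase)]
      rw [le_div_iff₀ (by positivity)]
      set s := Real.sqrt (Real.log (1 / η)) with hsdef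
      have h5 : t / 2 ≤ (s - 1 / 2 * s⁻¹) * t + 1 / 2 * s⁻¹ * η := by
        have h6 : 0 ≤ (s - 1 / 2 * s⁻¹ - 1 / 2) * t :=
          mul_nonneg (by linarith) ht0.le
        have h7 : 0 ≤ 1 / 2 * s⁻¹ * η := by positivity
        nlinarith
      have h8 := mul_self_le_mul_self (by linarith : (0:ℝ) ≤ t / 2) h5
      nlinarith [h8]
    have hz2 : η ^ 2 ≤ z ^ 2 := by
      rw [← htz]; nlinarith [hcase, hη₀]
    calc (∑' k : ℕ, Real.sin ((k + 1 : ℝ) * z) ^ 2 / ((k : ℝ) + 1) ^ 3)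
        ≤ 5 / 4 := hbound
      _ ≤ 8 / η ^ 2 * η ^ 2 * (1 / 4) := by
          have : 8 / η ^ 2 * η ^ 2 = 8 := by field_simp
          rw [this]; norm_num
      _ ≤ (3 + 8 / η ^ 2) * z ^ 2 * kappa2 η t := by
          apply mul_le_mul _ hκ (by norm_num) (by positivity)
          apply mul_le_mul _ hz2 (by positivity) (by positivity)
          have : (0 : ℝ) < 8 / η ^ 2 := by positivity
          linarith
end

section
/- Let 0 < η < 1/e. There exists a constant C > 0 such that for all real x, y with x ≠ y, the series ∑_{k=1}^∞ |sin²(k x) − sin²(k y)| / k³ converges and ( ∑_{k=1}^∞ |sin²(k x) − sin²(k y)| / k³ )² ≤ C·(x − y)²·κ̃₂(|x − y|). -/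
open Real

lemma abs_sin_sub_sin_le (a b : ℝ) : |Real.sin a - Real.sin b| ≤ |a - b| := by
  rw [Real.sin_sub_sin, abs_mul, abs_mul]
  have h1 : |Real.sin ((a - b) / 2)| ≤ |(a - b) / 2| := Real.abs_sin_le_abs
  have h2 : |Real.cos ((a + b) / 2)| ≤ 1 := Real.abs_cos_le_one _
  have h3 : |(a - b) / 2| = |a - b| / 2 := by rw [abs_div]; norm_num
  have h0 : (0 : ℝ) ≤ |Real.sin ((a - b) / 2)| := abs_nonneg _
  rw [abs_two]
  nlinarith [abs_nonneg (a - b), abs_nonneg (Real.cos ((a + b) / 2))]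

lemma kappa2_ge (η : ℝ) (hη₀ : 0 < η) (hη₁ : η < 1 / Real.exp 1) :
    ∀ t : ℝ, 0 < t → (1 : ℝ) / 4 ≤ kappa2 η t := by
  have hL : 1 < Real.log (1 / η) := by
    rw [Real.lt_log_iff_exp_lt (by positivity)]
    rw [lt_div_iff₀ (Real.exp_pos 1)] at hη₁
    rw [lt_div_iff₀ hη₀]
    nlinarith
  have hsL : 1 < Real.sqrt (Real.log (1 / η)) := by
    have := Real.lt_sqrt (x := 1) (y := Real.log (1 / η)) one_pos.le
    simpa using this.mpr (by simpa using hL)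
  intro t ht
  unfold kappa2
  split_ifs with h
  · -- t ≤ η, so log (1/t) ≥ log (1/η) > 1 ≥ 1/4
    have h1 : Real.log (1 / η) ≤ Real.log (1 / t) := by
      apply Real.log_le_log (by positivity)
      apply one_div_le_one_div_of_le ht h
    linarith
  · push_neg at h
    set a := Real.sqrt (Real.log (1 / η)) - 1 / 2 * (Real.sqrt (Real.log (1 / η)))⁻¹ with ha
    set b := 1 / 2 * (Real.sqrt (Real.log (1 / η)))⁻¹ * η with hb
    have hsinv : (Real.sqrt (Real.log (1 / η)))⁻¹ < 1 := by
      rw [inv_lt_one_iff₀]; right; exact hsL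
    have ha2 : (1 : ℝ) / 2 ≤ a := by
      have hinv0 : 0 < (Real.sqrt (Real.log (1 / η)))⁻¹ := by positivity
      rw [ha]; nlinarith
    have hb0 : 0 ≤ b := by
      have : 0 ≤ (Real.sqrt (Real.log (1 / η)))⁻¹ := by positivity
      rw [hb]; positivity
    rw [le_div_iff₀ (by positivity)]
    have h1 : t / 2 ≤ a * t + b := by nlinarith
    have h2 : (t / 2) ^ 2 ≤ (a * t + b) ^ 2 := by
      apply pow_le_pow_left₀ (by positivity) h1
    nlinarith

/-- Non-Lipschitz estimate for `g(t,x) = sin(t)·∑_{k≥1} sin²(kx)/k³`: for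
`0 < η < 1/e` there is `C > 0` such that for all `x ≠ y`, the series
`∑_{k≥1} |sin²(kx) − sin²(ky)|/k³` converges and the square of its sum is bounded by
`C·(x−y)²·κ̃₂(|x−y|)`. -/
theorem sum_sin_sq_diff_div_cube_le (η : ℝ) (hη₀ : 0 < η) (hη₁ : η < 1 / Real.exp 1) :
    ∃ C : ℝ, 0 < C ∧ ∀ x y : ℝ, x ≠ y →
      Summable (fun k : ℕ =>
        |Real.sin ((k + 1 : ℝ) * x) ^ 2 - Real.sin ((k + 1 : ℝ) * y) ^ 2| / ((k : ℝ) + 1) ^ 3) ∧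
      (∑' k : ℕ,
        |Real.sin ((k + 1 : ℝ) * x) ^ 2 - Real.sin ((k + 1 : ℝ) * y) ^ 2| / ((k : ℝ) + 1) ^ 3) ^ 2 ≤
        C * (x - y) ^ 2 * kappa2 η |x - y| := by
  have hS : Summable (fun k : ℕ => (1 : ℝ) / ((k : ℝ) + 1) ^ 2) := by
    have := Real.summable_one_div_nat_pow.mpr (show 1 < 2 by norm_num)
    exact_mod_cast (summable_nat_add_iff 1).mpr this |>.congr (fun k => by push_cast; ring_nf)
  set S := ∑' k : ℕ, (1 : ℝ) / ((k : ℝ) + 1) ^ 2 with hSdef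
  have hS1 : (1 : ℝ) ≤ S := by
    calc (1 : ℝ) = 1 / (((0 : ℕ) : ℝ) + 1) ^ 2 := by norm_num
      _ ≤ S := Summable.le_tsum hS 0 (fun k _ => by positivity)
  refine ⟨16 * S ^ 2, by positivity, fun x y hxy => ?_⟩
  have hterm : ∀ k : ℕ,
      |Real.sin ((k + 1 : ℝ) * x) ^ 2 - Real.sin ((k + 1 : ℝ) * y) ^ 2| / ((k : ℝ) + 1) ^ 3 ≤
      2 * |x - y| * (1 / ((k : ℝ) + 1) ^ 2) := by
    intro k
    have hk : (0 : ℝ) < (k : ℝ) + 1 := by positivity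
    have hlip : |Real.sin ((k + 1 : ℝ) * x) - Real.sin ((k + 1 : ℝ) * y)| ≤
        ((k : ℝ) + 1) * |x - y| := by
      calc |Real.sin ((k + 1 : ℝ) * x) - Real.sin ((k + 1 : ℝ) * y)|
          ≤ |(k + 1 : ℝ) * x - (k + 1 : ℝ) * y| := _root_.abs_sin_sub_sin_le _ _
        _ = ((k : ℝ) + 1) * |x - y| := by
            rw [show (k + 1 : ℝ) * x - (k + 1 : ℝ) * y = ((k : ℝ) + 1) * (x - y) by ring,
              abs_mul, abs_of_pos hk]
    have hsum2 : |Real.sin ((k + 1 : ℝ) * x) + Real.sin ((k + 1 : ℝ) * y)| ≤ 2 := by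
      calc |Real.sin ((k + 1 : ℝ) * x) + Real.sin ((k + 1 : ℝ) * y)|
          ≤ |Real.sin ((k + 1 : ℝ) * x)| + |Real.sin ((k + 1 : ℝ) * y)| := abs_add_le _ _
        _ ≤ 1 + 1 := add_le_add (Real.abs_sin_le_one _) (Real.abs_sin_le_one _)
        _ = 2 := by norm_num
    have hdiff : |Real.sin ((k + 1 : ℝ) * x) ^ 2 - Real.sin ((k + 1 : ℝ) * y) ^ 2| ≤
        2 * (((k : ℝ) + 1) * |x - y|) := by
      rw [show Real.sin ((k + 1 : ℝ) * x) ^ 2 - Real.sin ((k + 1 : ℝ) * y) ^ 2 =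
        (Real.sin ((k + 1 : ℝ) * x) + Real.sin ((k + 1 : ℝ) * y)) *
        (Real.sin ((k + 1 : ℝ) * x) - Real.sin ((k + 1 : ℝ) * y)) by ring, abs_mul]
      have h0 : 0 ≤ |Real.sin ((k + 1 : ℝ) * x) - Real.sin ((k + 1 : ℝ) * y)| := abs_nonneg _
      nlinarith [abs_nonneg (Real.sin ((k + 1 : ℝ) * x) + Real.sin ((k + 1 : ℝ) * y))]
    rw [div_le_iff₀ (by positivity)]
    calc |Real.sin ((k + 1 : ℝ) * x) ^ 2 - Real.sin ((k + 1 : ℝ) * y) ^ 2|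
        ≤ 2 * (((k : ℝ) + 1) * |x - y|) := hdiff
      _ = 2 * |x - y| * (1 / ((k : ℝ) + 1) ^ 2) * ((k : ℝ) + 1) ^ 3 := by
          field_simp
  have hsummable : Summable (fun k : ℕ =>
      |Real.sin ((k + 1 : ℝ) * x) ^ 2 - Real.sin ((k + 1 : ℝ) * y) ^ 2| / ((k : ℝ) + 1) ^ 3) := by
    apply Summable.of_nonneg_of_le (fun k => by positivity) hterm (hS.mul_left (2 * |x - y|))
  refine ⟨hsummable, ?_⟩
  have hsumle : (∑' k : ℕ,
      |Real.sin ((k + 1 : ℝ) * x) ^ 2 - Real.sin ((k + 1 : ℝ) * y) ^ 2| / ((k : ℝ) + 1) ^ 3) ≤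
      2 * |x - y| * S := by
    calc (∑' k : ℕ,
        |Real.sin ((k + 1 : ℝ) * x) ^ 2 - Real.sin ((k + 1 : ℝ) * y) ^ 2| / ((k : ℝ) + 1) ^ 3)
        ≤ ∑' k : ℕ, 2 * |x - y| * (1 / ((k : ℝ) + 1) ^ 2) :=
          Summable.tsum_le_tsum hterm hsummable (hS.mul_left _)
      _ = 2 * |x - y| * S := tsum_mul_left
  have h0 : 0 ≤ (∑' k : ℕ,
      |Real.sin ((k + 1 : ℝ) * x) ^ 2 - Real.sin ((k + 1 : ℝ) * y) ^ 2| / ((k : ℝ) + 1) ^ 3) :=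
    tsum_nonneg fun k => by positivity
  have hsq : (∑' k : ℕ,
      |Real.sin ((k + 1 : ℝ) * x) ^ 2 - Real.sin ((k + 1 : ℝ) * y) ^ 2| / ((k : ℝ) + 1) ^ 3) ^ 2 ≤
      (2 * |x - y| * S) ^ 2 := pow_le_pow_left₀ h0 hsumle 2
  have habs : |x - y| ^ 2 = (x - y) ^ 2 := sq_abs _
  have hk := kappa2_ge η hη₀ hη₁ |x - y| (abs_pos.mpr (sub_ne_zero.mpr hxy))
  have hxy2 : 0 ≤ (x - y) ^ 2 := sq_nonneg _
  calc (∑' k : ℕ,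
      |Real.sin ((k + 1 : ℝ) * x) ^ 2 - Real.sin ((k + 1 : ℝ) * y) ^ 2| / ((k : ℝ) + 1) ^ 3) ^ 2
      ≤ (2 * |x - y| * S) ^ 2 := hsq
    _ = 4 * S ^ 2 * (x - y) ^ 2 := by rw [mul_pow, mul_pow]; rw [habs]; ring
    _ ≤ 16 * S ^ 2 * (x - y) ^ 2 * kappa2 η |x - y| := by
        nlinarith [mul_le_mul_of_nonneg_left hk
          (show (0:ℝ) ≤ 16 * S ^ 2 * (x - y) ^ 2 by positivity)]
end
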